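/- Let n ≥ 0 be an integer. For a ∈ ℂ and k ∈ ℕ let binom(a, k) = a(a−1)⋯(a−k+1)/k! denote the generalized binomial coefficient. Define F(w) = Σ_{j=0}^{n} (−1)^{n−j} binom((2n+1)/2, n−j) · w^{2j+1}. Then for every w ∈ ℂ with |w| > 1, the series Σ_{k=0}^{∞} (−1)^{n+k+1} binom((2n+1)/2, n+k+1) · w^{−(2k+1)} converges unconditionally (HasSum) with sum (w · (1 − w^{−2})^{1/2})^{2n+1} − F(w), where (1 − w^{−2})^{1/2} is computed with the principal branch of the complex power. -/

import Mathlib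

/-- The generalized binomial coefficient `binom(a, k) = a(a-1)⋯(a-k+1)/k!`. -/
noncomputable def genBinom (a : ℂ) (k : ℕ) : ℂ :=
  (∏ i ∈ Finset.range k, (a - i)) / (k.factorial : ℂ)

lemma slit_of_ball {z : ℂ} (hz : ‖z‖ < 1) : (1 + z) ∈ Complex.slitPlane := by
  left
  have h := (abs_le.1 (Complex.abs_re_le_norm z)).1
  simp only [Complex.add_re, Complex.one_re]
  linarith

lemma iter_deriv_one_add_cpow (a : ℂ) (k : ℕ) :
    ∀ z ∈ Metric.ball (0 : ℂ) 1,
      iteratedDeriv k (fun z : ℂ => (1 + z) ^ a) z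
        = (∏ i ∈ Finset.range k, (a - i)) * (1 + z) ^ (a - k) := by
  induction k with
  | zero => intro z hz; simp
  | succ k ih =>
    intro z hz
    have hz' : ‖z‖ < 1 := by rwa [Metric.mem_ball, dist_zero_right] at hz
    have hopen : Metric.ball (0:ℂ) 1 ∈ nhds z := Metric.isOpen_ball.mem_nhds hz
    have heq : iteratedDeriv k (fun z : ℂ => (1+z)^a) =ᶠ[nhds z]
        fun z => (∏ i ∈ Finset.range k, (a - i)) * (1+z) ^ (a - (k : ℂ)) :=
      Filter.eventuallyEq_of_mem hopen ih
    rw [iteratedDeriv_succ, heq.deriv_eq]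
    have hd : HasDerivAt (fun z : ℂ => (1+z) ^ (a - (k : ℂ)))
        ((a - (k : ℂ)) * (1+z) ^ (a - (k : ℂ) - 1) * 1) z :=
      HasDerivAt.cpow_const ((hasDerivAt_id z).const_add 1) (slit_of_ball hz')
    rw [deriv_const_mul _ hd.differentiableAt, hd.deriv, Finset.prod_range_succ]
    have : a - (k : ℂ) - 1 = a - ((k : ℕ) + 1 : ℕ) := by push_cast; ring
    rw [this]
    ring

/-- The binomial series: for `‖x‖ < 1`, `(1+x)^a = Σ_k binom(a,k) x^k`. -/
lemma hasSum_one_add_cpow (a : ℂ) {x : ℂ} (hx : ‖x‖ < 1) :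
    HasSum (fun k : ℕ => genBinom a k * x ^ k) ((1 + x) ^ a) := by
  obtain ⟨r, hr1, hr2⟩ : ∃ r : ℝ, ‖x‖ < r ∧ r < 1 := exists_between hx
  have hr0 : 0 < r := lt_of_le_of_lt (norm_nonneg x) hr1
  set R : NNReal := ⟨r, hr0.le⟩ with hR
  have hdiff : DifferentiableOn ℂ (fun z : ℂ => (1+z)^a) (Metric.closedBall 0 R) := by
    intro z hz
    rw [Metric.mem_closedBall, dist_zero_right] at hz
    have hz1 : ‖z‖ < 1 := lt_of_le_of_lt hz hr2
    exact (HasDerivAt.cpow_const ((hasDerivAt_id z).const_add 1)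
      (slit_of_ball hz1)).differentiableAt.differentiableWithinAt
  have hR0 : (0 : NNReal) < R := by exact_mod_cast hr0
  have H := hdiff.hasFPowerSeriesOnBall hR0
  have hx' : x ∈ Metric.eball (0 : ℂ) R := by
    rw [EMetric.mem_ball, edist_zero_right]
    exact_mod_cast hr1
  have HS := H.hasSum_iteratedFDeriv hx'
  simp only [zero_add] at HS
  refine HS.congr_fun fun k => ?_
  have h0 : (0 : ℂ) ∈ Metric.ball (0 : ℂ) 1 := by simp
  have hiter := iter_deriv_one_add_cpow a k 0 h0
  rw [iteratedFDeriv_apply_eq_iteratedDeriv_mul_prod, hiter]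
  simp only [add_zero, Complex.one_cpow, mul_one, Finset.prod_const, Finset.card_univ,
    Fintype.card_fin, smul_eq_mul, genBinom]
  field_simp

theorem cassini_faber_decomposition (n : ℕ) :
    ∀ w : ℂ, 1 < ‖w‖ →
      HasSum
        (fun k : ℕ => (-1 : ℂ) ^ (n + k + 1) *
          genBinom ((2 * (n : ℂ) + 1) / 2) (n + k + 1) / w ^ (2 * k + 1))
        ((w * ((1 - (w ^ 2)⁻¹) ^ ((1 : ℂ) / 2))) ^ (2 * n + 1) -
          ∑ j ∈ Finset.range (n + 1),
            (-1 : ℂ) ^ (n - j) * genBinom ((2 * (n : ℂ) + 1) / 2) (n - j) * w ^ (2 * j + 1)) := by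
  intro w hw
  have hw0 : w ≠ 0 := by
    intro h; rw [h, norm_zero] at hw; linarith
  set a : ℂ := (2 * (n : ℂ) + 1) / 2 with ha
  have hx : ‖-(w ^ 2)⁻¹‖ < 1 := by
    rw [norm_neg, norm_inv, norm_pow]
    have h1 : (1 : ℝ) < ‖w‖ ^ 2 := by nlinarith
    rw [inv_lt_one_iff₀]
    right; exact h1
  have hb := hasSum_one_add_cpow a hx
  rw [show (1 : ℂ) + -(w ^ 2)⁻¹ = 1 - (w ^ 2)⁻¹ by ring] at hb
  have hb2 := hb.mul_left (w ^ (2 * n + 1))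
  set f : ℕ → ℂ := fun k => w ^ (2 * n + 1) * (genBinom a k * (-(w ^ 2)⁻¹) ^ k) with hf
  have H := (hasSum_nat_add_iff' (n + 1)).mpr hb2
  have key : (w * ((1 - (w ^ 2)⁻¹) ^ ((1 : ℂ) / 2))) ^ (2 * n + 1)
      = w ^ (2 * n + 1) * (1 - (w ^ 2)⁻¹) ^ a := by
    rw [mul_pow]
    congr 1
    rw [← Complex.cpow_nat_mul]
    congr 1
    push_cast
    ring
  have sumeq : ∑ i ∈ Finset.range (n + 1), f i
      = ∑ j ∈ Finset.range (n + 1),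
          (-1 : ℂ) ^ (n - j) * genBinom a (n - j) * w ^ (2 * j + 1) := by
    rw [← Finset.sum_range_reflect]
    refine Finset.sum_congr rfl fun j hj => ?_
    rw [Finset.mem_range] at hj
    have hjn : j ≤ n := Nat.lt_succ_iff.mp hj
    have hrw : n + 1 - 1 - j = n - j := by omega
    rw [hrw]
    simp only [hf]
    have hnp : (-(w ^ 2)⁻¹) ^ (n - j) = (-1 : ℂ) ^ (n - j) * ((w ^ 2) ^ (n - j))⁻¹ := by
      rw [show -(w ^ 2)⁻¹ = (-1 : ℂ) * (w ^ 2)⁻¹ by ring, mul_pow, inv_pow]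
    rw [hnp]
    have hpow : w ^ (2 * n + 1) = (w ^ 2) ^ (n - j) * w ^ (2 * j + 1) := by
      rw [← pow_mul, ← pow_add]
      congr 1
      omega
    rw [hpow]
    have hne : ((w ^ 2) ^ (n - j) : ℂ) ≠ 0 := pow_ne_zero _ (pow_ne_zero _ hw0)
    field_simp
  convert H using 1
  · rfl
  · funext k
    show (-1 : ℂ) ^ (n + k + 1) * genBinom a (n + k + 1) / w ^ (2 * k + 1) = f (k + (n + 1))
    simp only [hf]
    have hk : k + (n + 1) = n + k + 1 := by omega
    rw [hk]
    have hnp : (-(w ^ 2)⁻¹) ^ (n + k + 1) = (-1 : ℂ) ^ (n + k + 1) * ((w ^ 2) ^ (n + k + 1))⁻¹ := by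
      rw [show -(w ^ 2)⁻¹ = (-1 : ℂ) * (w ^ 2)⁻¹ by ring, mul_pow, inv_pow]
    rw [hnp]
    have hne : ((w ^ 2) ^ (n + k + 1) : ℂ) ≠ 0 := pow_ne_zero _ (pow_ne_zero _ hw0)
    have hne2 : (w : ℂ) ^ (2 * k + 1) ≠ 0 := pow_ne_zero _ hw0
    field_simp
    have hp : ((w : ℂ) ^ 2) ^ (n + k + 1) = w ^ (2 * n + 1) * w ^ (2 * k + 1) := by
      rw [← pow_mul, show 2 * (n + k + 1) = (2 * n + 1) + (2 * k + 1) by omega, pow_add]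
    rw [hp]
    ring
  · rw [key, sumeq]
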